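/- For all integers p, q ≥ 2, let H₀ be the subgroup of F₂ generated by a^{p+1} and b^{q+1}·a⁻¹. Then for every element w ∈ H₀, every maximal run of consecutive letters from the generator b (i.e. consecutive letters each equal to b or b⁻¹) in the reduced word of w has length at least 2; in particular, the reduced word of w never contains a single b or b⁻¹ surrounded only by letters a or a⁻¹ (or by the ends of the word). -/

import Mathlib

/-- The generator `a` of the free group on two generators. -/
def a : FreeGroup (Fin 2) := FreeGroup.of 0

/-- The generator `b` of the free group on two generators. -/
def b : FreeGroup (Fin 2) := FreeGroup.of 1

/-- The subgroup `H₀` of the free group on two generators, generated by `a^(p+1)` and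
`b^(q+1) * a⁻¹`: the image of the fundamental group of the first once-punctured torus. -/
def H₀ (p q : ℤ) : Subgroup (FreeGroup (Fin 2)) :=
  Subgroup.closure {a ^ (p + 1), b ^ (q + 1) * a⁻¹}

namespace Stmt10


/-- reduced-adjacency relation: adjacent letters don't cancel -/
def Rr {α : Type*} (u v : α × Bool) : Prop := u.1 = v.1 → u.2 = v.2

variable {α : Type*} [DecidableEq α]

lemma chain'_reduce (L : List (α × Bool)) : (FreeGroup.reduce L).Chain' Rr := by
  induction L with
  | nil => exact List.isChain_nil
  | cons x L ih =>
    rw [FreeGroup.reduce.cons]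
    cases h : FreeGroup.reduce L with
    | nil => exact List.isChain_singleton _
    | cons hd tl =>
      rw [h] at ih
      simp only
      by_cases hc : x.1 = hd.1 ∧ x.2 = !hd.2
      · rw [if_pos hc]; exact ih.tail
      · rw [if_neg hc]
        refine List.isChain_cons_cons.2 ⟨?_, ih⟩
        intro h1
        rcases Bool.eq_false_or_eq_true x.2 with h2 | h2 <;>
          rcases Bool.eq_false_or_eq_true hd.2 with h3 | h3 <;> simp_all [Rr]

lemma reduce_eq_self {L : List (α × Bool)} (h : L.Chain' Rr) : FreeGroup.reduce L = L := by
  induction L with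
  | nil => rfl
  | cons x L ih =>
    rw [FreeGroup.reduce.cons, ih h.tail]
    cases L with
    | nil => rfl
    | cons hd tl =>
      simp only
      rw [if_neg]
      rintro ⟨h1, h2⟩
      have := (List.isChain_cons_cons.1 h).1 h1
      simp [Rr, this] at h2




def OkBlock (B : List (Fin 2 × Bool)) : Prop :=
  (∀ v ∈ B, v.1 = 0) ∨ ∃ s k, 2 ≤ k ∧ B = List.replicate k ((1 : Fin 2), s)

def GoodL (W : List (Fin 2 × Bool)) : Prop :=
  ∃ Bs : List (List (Fin 2 × Bool)), W = Bs.flatten ∧ ∀ B ∈ Bs, OkBlock B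

lemma GoodL.nil : GoodL [] := ⟨[], rfl, by simp⟩

lemma GoodL.block {B W} (hB : OkBlock B) (hW : GoodL W) : GoodL (B ++ W) := by
  obtain ⟨Bs, rfl, hBs⟩ := hW
  refine ⟨B :: Bs, by simp, ?_⟩
  intro B' hB'
  rcases List.mem_cons.1 hB' with rfl | h
  exacts [hB, hBs _ h]

lemma good_split {W l r : List (Fin 2 × Bool)} {s : Bool} (hG : GoodL W)
    (hsplit : W = l ++ ((1 : Fin 2), s) :: r) :
    (∃ x ∈ l.getLast?, x.1 = 1) ∨ (∃ x ∈ r.head?, x.1 = 1) := by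
  obtain ⟨Bs, rfl, hBs⟩ := hG
  induction Bs generalizing l r with
  | nil => simp at hsplit
  | cons B Bs ih =>
    rw [List.flatten_cons] at hsplit
    rcases List.append_eq_append_iff.1 hsplit.symm with ⟨u, hB, hur⟩ | ⟨u, hl, hF⟩
    · -- B = l ++ u, (1,s)::r = u ++ Bs.flatten
      cases u with
      | nil =>
        rcases ih (fun B h => hBs B (List.mem_cons_of_mem _ h)) (l := []) (r := r)
            (by simpa using hur.symm) with h | h
        · simp at h
        · exact Or.inr h
      | cons m t =>
        obtain ⟨rfl, hr⟩ : (1, s) = m ∧ r = t ++ Bs.flatten := by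
          have := hur
          simp only [List.cons_append] at this
          exact ⟨by injection this, by injection this⟩
        rcases hBs B (List.mem_cons_self) with hall | ⟨s0, k, hk, hrep⟩
        · have : ((1 : Fin 2), s).1 = 0 := hall _ (by simp [hB])
          simp at this
        · cases l with
          | nil =>
            -- B = (1,s)::t, t = replicate (k-1), k ≥ 2 so t nonempty
            right
            obtain ⟨k', rfl⟩ : ∃ k', k = k' + 2 := ⟨k - 2, by omega⟩
            rw [hrep] at hB
            simp only [List.nil_append, List.replicate_succ] at hB
            obtain ⟨h1, h2⟩ : ((1 : Fin 2), s0) = (1, s) ∧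
                List.replicate (k' + 1) ((1 : Fin 2), s0) = t := ⟨by injection hB, by injection hB⟩
            rw [hr, ← h2]
            simp [List.replicate_succ]
          | cons z l' =>
            left
            have hne : z :: l' ≠ [] := List.cons_ne_nil _ _
            refine ⟨(z :: l').getLast hne, List.getLast_mem_getLast? hne, ?_⟩
            have hmem : (z :: l').getLast hne ∈ B := by
              rw [hB]; exact List.mem_append_left _ (List.getLast_mem hne)
            rw [hrep] at hmem
            rw [List.eq_of_mem_replicate hmem]
    · -- l = B ++ u, Bs.flatten = u ++ (1,s)::r
      rcases ih (fun B h => hBs B (List.mem_cons_of_mem _ h)) (l := u) (r := r) hF with ⟨x, hx, h1⟩ | h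
      · left
        cases u with
        | nil => simp at hx
        | cons z u' =>
          refine ⟨x, ?_, h1⟩
          rw [hl, List.getLast?_append_of_ne_nil _ (List.cons_ne_nil _ _)]
          exact hx
      · exact Or.inr h



def Ew (P Q : ℕ) : List (Bool × Bool) → List (Fin 2 × Bool)
  | [] => []
  | (false, true) :: L => List.replicate P ((0 : Fin 2), true) ++ Ew P Q L
  | (false, false) :: (true, false) :: L =>
      List.replicate (P - 1) ((0 : Fin 2), false) ++
        (List.replicate Q ((1 : Fin 2), false) ++ Ew P Q L)
  | (false, false) :: L => List.replicate P ((0 : Fin 2), false) ++ Ew P Q L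
  | (true, true) :: (false, true) :: L =>
      List.replicate Q ((1 : Fin 2), true) ++
        (List.replicate (P - 1) ((0 : Fin 2), true) ++ Ew P Q L)
  | (true, true) :: L => List.replicate Q ((1 : Fin 2), true) ++ (((0 : Fin 2), false) :: Ew P Q L)
  | (true, false) :: L =>
      ((0 : Fin 2), true) :: (List.replicate Q ((1 : Fin 2), false) ++ Ew P Q L)

lemma Ew_ff (P Q : ℕ) (L : List (Bool × Bool)) (h : ∀ L', L ≠ (true, false) :: L') :
    Ew P Q ((false, false) :: L) = List.replicate P ((0 : Fin 2), false) ++ Ew P Q L := by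
  match L with
  | [] => rfl
  | (false, s) :: L' => rfl
  | (true, true) :: L' => rfl
  | (true, false) :: L' => exact absurd rfl (h L')

lemma Ew_tt (P Q : ℕ) (L : List (Bool × Bool)) (h : ∀ L', L ≠ (false, true) :: L') :
    Ew P Q ((true, true) :: L) =
      List.replicate Q ((1 : Fin 2), true) ++ (((0 : Fin 2), false) :: Ew P Q L) := by
  match L with
  | [] => rfl
  | (true, s) :: L' => rfl
  | (false, false) :: L' => rfl
  | (false, true) :: L' => exact absurd rfl (h L')

/-- the homomorphism sending the generators of the abstract free group of rank two to
`x = a^P` and `y = b^Q * a⁻¹`. -/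
def ψ (P Q : ℕ) : FreeGroup Bool →* FreeGroup (Fin 2) :=
  FreeGroup.lift (fun t => if t then b ^ Q * a⁻¹ else a ^ P)

lemma mk_cons (x : Fin 2 × Bool) (L) :
    FreeGroup.mk (x :: L) = FreeGroup.mk [x] * FreeGroup.mk L := by
  rw [FreeGroup.mul_mk]; rfl

lemma mk_nil : FreeGroup.mk ([] : List (Fin 2 × Bool)) = 1 := rfl

lemma mk_single (i : Fin 2) (s : Bool) :
    FreeGroup.mk [(i, s)] = (cond s (FreeGroup.of i) (FreeGroup.of i)⁻¹) := by
  cases s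
  · show _ = (FreeGroup.mk [(i, true)])⁻¹
    rw [FreeGroup.inv_mk]; rfl
  · rfl

lemma mk_replicate (i : Fin 2) (s : Bool) (n : ℕ) :
    FreeGroup.mk (List.replicate n (i, s)) = (cond s (FreeGroup.of i) (FreeGroup.of i)⁻¹) ^ n := by
  induction n with
  | zero => rfl
  | succ n ih =>
    rw [List.replicate_succ, mk_cons, ih, mk_single, pow_succ']

lemma bool_mk_cons (x : Bool × Bool) (L) :
    FreeGroup.mk (x :: L) = FreeGroup.mk [x] * FreeGroup.mk L := by
  rw [FreeGroup.mul_mk]; rfl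

lemma ψ_mk_Ew (P Q : ℕ) (hP : 1 ≤ P) (L : List (Bool × Bool)) :
    ψ P Q (FreeGroup.mk L) = FreeGroup.mk (Ew P Q L) := by
  obtain ⟨P', rfl⟩ : ∃ P', P = P' + 1 := ⟨P - 1, by omega⟩
  have hx : ψ (P' + 1) Q (FreeGroup.mk [(false, true)]) = a ^ (P' + 1) := by
    rw [show FreeGroup.mk [(false, true)] = FreeGroup.of false from rfl]
    simp [ψ]
  have hxi : ψ (P' + 1) Q (FreeGroup.mk [(false, false)]) = (a ^ (P' + 1))⁻¹ := by
    have h0 : FreeGroup.mk [(false, false)] = (FreeGroup.of false)⁻¹ := by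
      rw [show FreeGroup.of false = FreeGroup.mk [(false, true)] from rfl, FreeGroup.inv_mk]; rfl
    rw [h0, map_inv]
    simp [ψ]
  have hy : ψ (P' + 1) Q (FreeGroup.mk [(true, true)]) = b ^ Q * a⁻¹ := by
    rw [show FreeGroup.mk [(true, true)] = FreeGroup.of true from rfl]
    simp [ψ]
  have hyi : ψ (P' + 1) Q (FreeGroup.mk [(true, false)]) = (b ^ Q * a⁻¹)⁻¹ := by
    have h0 : FreeGroup.mk [(true, false)] = (FreeGroup.of true)⁻¹ := by
      rw [show FreeGroup.of true = FreeGroup.mk [(true, true)] from rfl, FreeGroup.inv_mk]; rfl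
    rw [h0, map_inv]
    simp [ψ]
  induction L using Ew.induct with
  | case1 =>
    rw [show FreeGroup.mk ([] : List (Bool × Bool)) = 1 from rfl, map_one]
    rfl
  | case2 L ih =>
    rw [bool_mk_cons, map_mul, hx, ih, show Ew (P'+1) Q ((false,true) :: L) =
      List.replicate (P'+1) ((0:Fin 2), true) ++ Ew (P'+1) Q L from rfl,
      ← FreeGroup.mul_mk, mk_replicate]
    simp only [cond_true, cond_false, Nat.add_sub_cancel,
      show FreeGroup.of (0 : Fin 2) = a from rfl, show FreeGroup.of (1 : Fin 2) = b from rfl]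
  | case3 L ih =>
    rw [bool_mk_cons, map_mul, hxi, bool_mk_cons, map_mul, hyi, ih,
      show Ew (P'+1) Q ((false,false) :: (true,false) :: L) =
        List.replicate (P'+1-1) ((0:Fin 2), false) ++
          (List.replicate Q ((1:Fin 2), false) ++ Ew (P'+1) Q L) from rfl,
      ← FreeGroup.mul_mk, ← FreeGroup.mul_mk, mk_replicate, mk_replicate]
    simp only [cond_true, cond_false, Nat.add_sub_cancel,
      show FreeGroup.of (0 : Fin 2) = a from rfl, show FreeGroup.of (1 : Fin 2) = b from rfl]
    group
  | case4 L hL ih =>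
    rw [bool_mk_cons, map_mul, hxi, ih, Ew_ff _ _ _ hL, ← FreeGroup.mul_mk, mk_replicate]
    simp only [cond_true, cond_false, Nat.add_sub_cancel,
      show FreeGroup.of (0 : Fin 2) = a from rfl, show FreeGroup.of (1 : Fin 2) = b from rfl]
    group
  | case5 L ih =>
    rw [bool_mk_cons, map_mul, hy, bool_mk_cons, map_mul, hx, ih,
      show Ew (P'+1) Q ((true,true) :: (false,true) :: L) =
        List.replicate Q ((1:Fin 2), true) ++
          (List.replicate (P'+1-1) ((0:Fin 2), true) ++ Ew (P'+1) Q L) from rfl,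
      ← FreeGroup.mul_mk, ← FreeGroup.mul_mk, mk_replicate, mk_replicate]
    simp only [cond_true, cond_false, Nat.add_sub_cancel,
      show FreeGroup.of (0 : Fin 2) = a from rfl, show FreeGroup.of (1 : Fin 2) = b from rfl]
    group
  | case6 L hL ih =>
    rw [bool_mk_cons, map_mul, hy, ih, Ew_tt _ _ _ hL, ← FreeGroup.mul_mk, mk_cons,
      mk_single, mk_replicate]
    simp only [cond_true, cond_false, Nat.add_sub_cancel,
      show FreeGroup.of (0 : Fin 2) = a from rfl, show FreeGroup.of (1 : Fin 2) = b from rfl]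
    group
  | case7 L ih =>
    rw [bool_mk_cons, map_mul, hyi, ih,
      show Ew (P'+1) Q ((true,false) :: L) =
        ((0:Fin 2), true) :: (List.replicate Q ((1:Fin 2), false) ++ Ew (P'+1) Q L) from rfl,
      mk_cons, mk_single, ← FreeGroup.mul_mk, mk_replicate]
    simp only [cond_true, cond_false, Nat.add_sub_cancel,
      show FreeGroup.of (0 : Fin 2) = a from rfl, show FreeGroup.of (1 : Fin 2) = b from rfl]
    group

/-- predicted head of the expansion -/
def hd? : Option (Bool × Bool) → Option (Fin 2 × Bool)
  | none => none
  | some (false, s) => some (0, s)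
  | some (true, true) => some (1, true)
  | some (true, false) => some (0, true)

lemma chain_repl_app (v : Fin 2 × Bool) (n : ℕ) {W : List (Fin 2 × Bool)}
    (hW : W.Chain' Rr) (hhead : ∀ y ∈ W.head?, Rr v y) :
    (List.replicate n v ++ W).Chain' Rr := by
  induction n with
  | zero => simpa using hW
  | succ n ih =>
    rw [List.replicate_succ, List.cons_append]
    refine List.isChain_cons.2 ⟨?_, ih⟩
    intro y hy
    cases n with
    | zero => exact hhead y (by simpa using hy)
    | succ m =>
      rw [List.replicate_succ, List.cons_append, List.head?_cons] at hy
      obtain rfl : y = v := by simpa using hy.symm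
      intro _; rfl

lemma head_repl_app (v : Fin 2 × Bool) {n : ℕ} (hn : n ≠ 0) (W : List (Fin 2 × Bool)) :
    (List.replicate n v ++ W).head? = some v := by
  obtain ⟨m, rfl⟩ : ∃ m, n = m + 1 := ⟨n - 1, by omega⟩
  rw [List.replicate_succ, List.cons_append, List.head?_cons]

lemma r10 (s s' : Bool) : Rr ((1 : Fin 2), s) ((0 : Fin 2), s') :=
  fun h => absurd (show (1 : Fin 2) = 0 from h) (by decide)

lemma r01 (s s' : Bool) : Rr ((0 : Fin 2), s) ((1 : Fin 2), s') :=
  fun h => absurd (show (0 : Fin 2) = 1 from h) (by decide)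

lemma rss (i : Fin 2) (s : Bool) : Rr (i, s) (i, s) := fun _ => rfl

lemma mem_hd? {o : Option (Bool × Bool)} {y : Fin 2 × Bool} (hy : y ∈ hd? o) :
    (∃ s, o = some (false, s) ∧ y = ((0 : Fin 2), s)) ∨
      (o = some (true, true) ∧ y = ((1 : Fin 2), true)) ∨
        (o = some (true, false) ∧ y = ((0 : Fin 2), true)) := by
  match o with
  | none => simp [hd?] at hy
  | some (false, s) => exact Or.inl ⟨s, rfl, by simpa [hd?] using hy.symm⟩
  | some (true, true) => exact Or.inr (Or.inl ⟨rfl, by simpa [hd?] using hy.symm⟩)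
  | some (true, false) => exact Or.inr (Or.inr ⟨rfl, by simpa [hd?] using hy.symm⟩)

lemma head_eq_cons {α : Type*} {L : List α} {z : α} (h : L.head? = some z) :
    L = z :: L.tail := by
  cases L with
  | nil => simp at h
  | cons w t => rw [List.head?_cons, Option.some_inj] at h; rw [h]; rfl

lemma chain'_Ew (P Q : ℕ) (hP : 3 ≤ P) (hQ : 1 ≤ Q) (L : List (Bool × Bool))
    (hL : L.Chain' Rr) :
    (Ew P Q L).Chain' Rr ∧ (Ew P Q L).head? = hd? L.head? := by
  induction L using Ew.induct with
  | case1 => exact ⟨List.isChain_nil, rfl⟩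
  | case2 L ih =>
    obtain ⟨hc, hh⟩ := ih hL.tail
    have hrel : ∀ y ∈ (Ew P Q L).head?, Rr ((0 : Fin 2), true) y := by
      intro y hy
      rw [hh] at hy
      rcases mem_hd? hy with ⟨s', h1, rfl⟩ | ⟨h1, rfl⟩ | ⟨h1, rfl⟩
      · have hs : s' = true :=
          (((List.isChain_cons.1 hL).1 (false, s') (by simp [h1])) rfl).symm
        rw [hs]; exact rss _ _
      · exact r01 _ _
      · exact rss _ _
    exact ⟨chain_repl_app _ P hc hrel, head_repl_app _ (by omega) _⟩
  | case3 L ih =>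
    obtain ⟨hc, hh⟩ := ih hL.tail.tail
    have hrel : ∀ y ∈ (Ew P Q L).head?, Rr ((1 : Fin 2), false) y := by
      intro y hy
      rw [hh] at hy
      rcases mem_hd? hy with ⟨s', h1, rfl⟩ | ⟨h1, rfl⟩ | ⟨h1, rfl⟩
      · exact r10 _ _
      · have := ((List.isChain_cons.1 hL.tail).1 (true, true) (by simp [h1])) rfl
        simp at this
      · exact r10 _ _
    have C1 := chain_repl_app ((1 : Fin 2), false) Q hc hrel
    have hrel2 : ∀ y ∈ (List.replicate Q ((1 : Fin 2), false) ++ Ew P Q L).head?,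
        Rr ((0 : Fin 2), false) y := by
      intro y hy
      rw [head_repl_app _ (by omega) _] at hy
      obtain rfl : y = ((1 : Fin 2), false) := by simpa using hy.symm
      exact r01 _ _
    exact ⟨chain_repl_app _ (P - 1) C1 hrel2, head_repl_app _ (by omega) _⟩
  | case4 L hne ih =>
    obtain ⟨hc, hh⟩ := ih hL.tail
    rw [Ew_ff _ _ _ hne]
    have hrel : ∀ y ∈ (Ew P Q L).head?, Rr ((0 : Fin 2), false) y := by
      intro y hy
      rw [hh] at hy
      rcases mem_hd? hy with ⟨s', h1, rfl⟩ | ⟨h1, rfl⟩ | ⟨h1, rfl⟩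
      · have hs : s' = false :=
          ((List.isChain_cons.1 hL).1 (false, s') (by simp [h1])) rfl |>.symm
        rw [hs]; exact rss _ _
      · exact r01 _ _
      · exact absurd (head_eq_cons h1) (hne _)
    exact ⟨chain_repl_app _ P hc hrel, head_repl_app _ (by omega) _⟩
  | case5 L ih =>
    obtain ⟨hc, hh⟩ := ih hL.tail.tail
    have hrel : ∀ y ∈ (Ew P Q L).head?, Rr ((0 : Fin 2), true) y := by
      intro y hy
      rw [hh] at hy
      rcases mem_hd? hy with ⟨s', h1, rfl⟩ | ⟨h1, rfl⟩ | ⟨h1, rfl⟩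
      · have hs : s' = true :=
          (((List.isChain_cons.1 hL.tail).1 (false, s') (by simp [h1])) rfl).symm
        rw [hs]; exact rss _ _
      · exact r01 _ _
      · exact rss _ _
    have C1 := chain_repl_app ((0 : Fin 2), true) (P - 1) hc hrel
    have hrel2 : ∀ y ∈ (List.replicate (P - 1) ((0 : Fin 2), true) ++ Ew P Q L).head?,
        Rr ((1 : Fin 2), true) y := by
      intro y hy
      rw [head_repl_app _ (by omega) _] at hy
      obtain rfl : y = ((0 : Fin 2), true) := by simpa using hy.symm
      exact r10 _ _
    exact ⟨chain_repl_app _ Q C1 hrel2, head_repl_app _ (by omega) _⟩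
  | case6 L hne ih =>
    obtain ⟨hc, hh⟩ := ih hL.tail
    rw [Ew_tt _ _ _ hne]
    have hrel : ∀ y ∈ (Ew P Q L).head?, Rr ((0 : Fin 2), false) y := by
      intro y hy
      rw [hh] at hy
      rcases mem_hd? hy with ⟨s', h1, rfl⟩ | ⟨h1, rfl⟩ | ⟨h1, rfl⟩
      · cases s' with
        | false => exact rss _ _
        | true => exact absurd (head_eq_cons h1) (hne _)
      · exact r01 _ _
      · have := ((List.isChain_cons.1 hL).1 (true, false) (by simp [h1])) rfl
        simp at this
    have C1 : (((0 : Fin 2), false) :: Ew P Q L).Chain' Rr :=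
      List.isChain_cons.2 ⟨hrel, hc⟩
    have hrel2 : ∀ y ∈ (((0 : Fin 2), false) :: Ew P Q L).head?, Rr ((1 : Fin 2), true) y := by
      intro y hy
      obtain rfl : y = ((0 : Fin 2), false) := by simpa using hy.symm
      exact r10 _ _
    exact ⟨chain_repl_app _ Q C1 hrel2, head_repl_app _ (by omega) _⟩
  | case7 L ih =>
    obtain ⟨hc, hh⟩ := ih hL.tail
    have hrel : ∀ y ∈ (Ew P Q L).head?, Rr ((1 : Fin 2), false) y := by
      intro y hy
      rw [hh] at hy
      rcases mem_hd? hy with ⟨s', h1, rfl⟩ | ⟨h1, rfl⟩ | ⟨h1, rfl⟩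
      · exact r10 _ _
      · have := ((List.isChain_cons.1 hL).1 (true, true) (by simp [h1])) rfl
        simp at this
      · exact r10 _ _
    have C1 := chain_repl_app ((1 : Fin 2), false) Q hc hrel
    refine ⟨List.isChain_cons.2 ⟨?_, C1⟩, rfl⟩
    intro y hy
    rw [head_repl_app _ (by omega) _] at hy
    obtain rfl : y = ((1 : Fin 2), false) := by simpa using hy.symm
    exact r01 _ _


lemma okA (n : ℕ) (s : Bool) : OkBlock (List.replicate n ((0 : Fin 2), s)) :=
  Or.inl fun v hv => by rw [List.eq_of_mem_replicate hv]

lemma okB {Q : ℕ} (hQ : 2 ≤ Q) (s : Bool) : OkBlock (List.replicate Q ((1 : Fin 2), s)) :=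
  Or.inr ⟨s, Q, hQ, rfl⟩

lemma okSingle (s : Bool) : OkBlock [((0 : Fin 2), s)] :=
  Or.inl fun v hv => by rw [show v = ((0 : Fin 2), s) by simpa using hv]

lemma goodL_Ew (P Q : ℕ) (hQ : 2 ≤ Q) (L : List (Bool × Bool)) : GoodL (Ew P Q L) := by
  induction L using Ew.induct with
  | case1 => exact GoodL.nil
  | case2 L ih => exact GoodL.block (okA _ _) ih
  | case3 L ih => exact GoodL.block (okA _ _) (GoodL.block (okB hQ _) ih)
  | case4 L hne ih => rw [Ew_ff _ _ _ hne]; exact GoodL.block (okA _ _) ih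
  | case5 L ih => exact GoodL.block (okB hQ _) (GoodL.block (okA _ _) ih)
  | case6 L hne ih =>
    rw [Ew_tt _ _ _ hne]
    exact GoodL.block (okB hQ _)
      (show GoodL ([((0 : Fin 2), false)] ++ Ew P Q L) from GoodL.block (okSingle _) ih)
  | case7 L ih =>
    exact show GoodL ([((0 : Fin 2), true)] ++ _) from
      GoodL.block (okSingle _) (GoodL.block (okB hQ _) ih)

end Stmt10

section
open Stmt10

/-- For `p, q ≥ 2` and `w ∈ H₀`, every maximal run of consecutive `b`-letters in the reduced
word of `w` has length at least `2`: every occurrence of a letter `b^{±1}` has a neighbouring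
letter which is also `b^{±1}`. -/
theorem stmt_10 (p q : ℤ) (hp : 2 ≤ p) (hq : 2 ≤ q) (w : FreeGroup (Fin 2))
    (hw : w ∈ H₀ p q) :
    ∀ (l r : List (Fin 2 × Bool)) (s : Bool),
      w.toWord = l ++ ((1 : Fin 2), s) :: r →
      (∃ x ∈ l.getLast?, x.1 = 1) ∨ (∃ x ∈ r.head?, x.1 = 1) := by
  intro l r s hsplit
  set P := (p + 1).toNat with hPdef
  set Q := (q + 1).toNat with hQdef
  have hcastP : (P : ℤ) = p + 1 := Int.toNat_of_nonneg (by omega)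
  have hcastQ : (Q : ℤ) = q + 1 := Int.toNat_of_nonneg (by omega)
  have hP3 : 3 ≤ P := by omega
  have hQ3 : 3 ≤ Q := by omega
  have hzpa : a ^ (p + 1) = a ^ P := by rw [← hcastP, zpow_natCast]
  have hzpb : b ^ (q + 1) = b ^ Q := by rw [← hcastQ, zpow_natCast]
  have hrange : H₀ p q = (ψ P Q).range := by
    rw [H₀, ψ, FreeGroup.range_lift_eq_closure]
    congr 1
    ext g
    simp only [Set.mem_range, Bool.exists_bool, if_true, if_false, Set.mem_insert_iff,
      Set.mem_singleton_iff, hzpa, hzpb]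
    exact ⟨fun h => h.elim (fun h => Or.inl h.symm) fun h => Or.inr h.symm,
      fun h => h.elim (fun h => Or.inl h.symm) fun h => Or.inr h.symm⟩
  rw [hrange] at hw
  obtain ⟨u, rfl⟩ := hw
  have hLred : u.toWord.Chain' Rr := by
    have := chain'_reduce (α := Bool) u.toWord
    rwa [FreeGroup.reduce_toWord] at this
  have h1 : ψ P Q u = FreeGroup.mk (Ew P Q u.toWord) := by
    conv_lhs => rw [← FreeGroup.mk_toWord (x := u)]
    exact ψ_mk_Ew P Q (by omega) u.toWord
  have h2 : (ψ P Q u).toWord = Ew P Q u.toWord := by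
    rw [h1, FreeGroup.toWord_mk,
      reduce_eq_self (chain'_Ew P Q hP3 (by omega) u.toWord hLred).1]
  rw [h2] at hsplit
  exact good_split (goodL_Ew P Q (by omega) u.toWord) hsplit

end
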